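/- Let F : ℝ^P → ℝ^{m×T} be continuously differentiable, let X ∈ ℝ^{m×T}, and let L(w) = (1/2)‖F(w) − X‖_F² be the squared loss. Fix μ > 0 and a set C ⊆ ℝ^P. If for every w ∈ C the minimum eigenvalue of the tangent kernel matrix K(w) is at least μ (equivalently, vᵀK(w)v ≥ μ‖v‖² for all v ∈ ℝ^{mT}), then L satisfies the μ-PL* condition on C, i.e., ‖∇_w L(w)‖² ≥ μ L(w) for all w ∈ C. -/

import Mathlib

open scoped BigOperators Matrix RealInnerProductSpace

/-- The tangent kernel matrix `K(w) = J(w) J(w)ᵀ` of a map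
`F : ℝ^P → ℝ^{m×T}` (with Euclidean/Frobenius structure), where
`J(w)` is the Jacobian of `w ↦ vec (F w)`. -/
noncomputable def tangentKernel {ι κ : Type*} [Fintype ι] [DecidableEq ι] [Fintype κ]
    (F : EuclideanSpace ℝ ι → EuclideanSpace ℝ κ)
    (w : EuclideanSpace ℝ ι) : Matrix κ κ ℝ :=
  (Matrix.of fun a p => fderiv ℝ F w (EuclideanSpace.single p 1) a) *
    (Matrix.of fun a p => fderiv ℝ F w (EuclideanSpace.single p 1) a)ᵀ

/-- If the tangent kernel of a continuously differentiable model
`F : ℝ^P → ℝ^{m×T}` is uniformly conditioned on `C` (i.e. `vᵀ K(w) v ≥ μ ‖v‖²`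
for all `v` and all `w ∈ C`), then the squared loss
`L(w) = (1/2)‖F(w) − X‖_F²` satisfies the `μ`-PL* condition on `C`. -/
theorem squared_loss_PLstar_of_uniform_conditioning
    {P m T : ℕ}
    (F : EuclideanSpace ℝ (Fin P) → EuclideanSpace ℝ (Fin m × Fin T))
    (hF : ContDiff ℝ 1 F)
    (X : EuclideanSpace ℝ (Fin m × Fin T))
    (μ : ℝ) (hμ : 0 < μ)
    (C : Set (EuclideanSpace ℝ (Fin P)))
    (hcond : ∀ w ∈ C, ∀ v : Fin m × Fin T → ℝ,
      μ * (∑ i, v i ^ 2) ≤ v ⬝ᵥ (tangentKernel F w).mulVec v) :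
    ∀ w ∈ C,
      μ * ((1 / 2) * ‖F w - X‖ ^ 2) ≤
        ‖gradient (fun u => (1 / 2) * ‖F u - X‖ ^ 2) w‖ ^ 2 := by
  intro w hw
  set J := fderiv ℝ F w with hJ
  set v : EuclideanSpace ℝ (Fin m × Fin T) := F w - X with hv
  -- derivative of the loss
  have hG : HasFDerivAt (fun u => F u - X) J w :=
    ((hF.differentiable one_ne_zero w).hasFDerivAt).sub_const X
  have h1 : HasFDerivAt (fun u => (1 / 2 : ℝ) * ⟪F u - X, F u - X⟫)
      ((1 / 2 : ℝ) • ((fderivInnerCLM ℝ (v, v)).comp (J.prod J))) w :=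
    (hG.inner ℝ hG).const_mul (1 / 2)
  have hfun : (fun u => (1 / 2 : ℝ) * ⟪F u - X, F u - X⟫)
      = (fun u => (1 / 2 : ℝ) * ‖F u - X‖ ^ 2) := by
    funext u; rw [real_inner_self_eq_norm_sq]
  rw [hfun] at h1
  have hgrad : gradient (fun u => (1 / 2 : ℝ) * ‖F u - X‖ ^ 2) w
      = (InnerProductSpace.toDual ℝ _).symm
          ((1 / 2 : ℝ) • ((fderivInnerCLM ℝ (v, v)).comp (J.prod J))) :=
    h1.hasGradientAt.gradient
  set g := gradient (fun u => (1 / 2 : ℝ) * ‖F u - X‖ ^ 2) w with hg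
  have hgp : ∀ p : Fin P, g p = ⟪v, J (EuclideanSpace.single p 1)⟫ := by
    intro p
    have : ⟪g, EuclideanSpace.single p 1⟫ = g p := by
      simp [EuclideanSpace.inner_single_right]
    rw [← this, hgrad, InnerProductSpace.toDual_symm_apply]
    simp only [fderivInnerCLM_apply, ContinuousLinearMap.smul_apply, ContinuousLinearMap.comp_apply,
      ContinuousLinearMap.prod_apply, smul_eq_mul, PiLp.inner_apply, RCLike.inner_apply,
      starRingEnd_apply, star_trivial]
    rw [Finset.sum_congr rfl (fun x _ => mul_comm ((J (EuclideanSpace.single p 1)) x) (v x))]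
    ring
  -- norm of gradient
  have hnormg : ‖g‖ ^ 2 = ∑ p, (⟪v, J (EuclideanSpace.single p 1)⟫) ^ 2 := by
    rw [EuclideanSpace.norm_eq, Real.sq_sqrt (by positivity)]
    exact Finset.sum_congr rfl fun p _ => by rw [hgp p]; simp [sq_abs]
  -- the quadratic form
  have hquad : (fun a => v a) ⬝ᵥ (tangentKernel F w).mulVec (fun a => v a)
      = ∑ p, (⟪v, J (EuclideanSpace.single p 1)⟫) ^ 2 := by
    rw [tangentKernel, ← Matrix.mulVec_mulVec, Matrix.dotProduct_mulVec]
    simp only [Matrix.vecMul, Matrix.mulVec, dotProduct, Matrix.transpose_apply,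
      Matrix.of_apply]
    refine Finset.sum_congr rfl fun p _ => ?_
    rw [sq, PiLp.inner_apply]
    simp only [RCLike.inner_apply, starRingEnd_apply, star_trivial, ← hJ]
    congr 1
    exact Finset.sum_congr rfl fun a _ => mul_comm _ _
  have hnv : ∑ i, (fun a => v a) i ^ 2 = ‖v‖ ^ 2 := by
    rw [EuclideanSpace.norm_eq, Real.sq_sqrt (by positivity)]
    exact Finset.sum_congr rfl fun i _ => by simp [sq_abs]
  have hc := hcond w hw (fun a => v a)
  rw [hnv, hquad] at hc
  calc μ * ((1 / 2) * ‖F w - X‖ ^ 2) ≤ μ * ‖v‖ ^ 2 := by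
        rw [hv]; nlinarith [norm_nonneg (F w - X), hμ.le]
    _ ≤ ∑ p, (⟪v, J (EuclideanSpace.single p 1)⟫) ^ 2 := hc
    _ = ‖g‖ ^ 2 := hnormg.symm
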